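/- Let (x_s, y_s⋆) ∈ (dom g ∩ dom φ_X) × (dom h⋆ ∩ dom φ_{Y⋆}) be a saddle point of L. Then for every K ≥ 1, the iterates of the accelerated nonlinear PDHG method for strongly convex problems satisfy (γ_g/(1 + γ_g τ_0))·D_X(x_s, x_K) + (1/σ_K)·D_Y(y_s⋆, y_K⋆) ≤ Δ_K(x_s, y_s⋆) ≤ (σ_0/σ_K)·Δ_0(x_s, y_s⋆). -/

import Mathlib

open Filter Topology

lemma convexOn_add_affine' {E : Type*} [NormedAddCommGroup E] [NormedSpace ℝ E]
    {S : Set E} {f : E → ℝ} (hf : ConvexOn ℝ S f) (l : E → ℝ)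
    (hl : ∀ (a b : ℝ) (x y : E), l (a • x + b • y) = a * l x + b * l y) (c : ℝ) :
    ConvexOn ℝ S (fun x => f x + l x + c) := by
  refine ⟨hf.1, fun x hx y hy a b ha hb hab => ?_⟩
  have h1 := hf.2 hx hy ha hb hab
  have h2 := hl a b x y
  have h3 : a * c + b * c = c := by rw [← add_mul, hab, one_mul]
  simp only [smul_eq_mul] at *
  nlinarith [h1, h2, h3]

lemma three_point' {E : Type*} [NormedAddCommGroup E] [NormedSpace ℝ E]
    {S : Set E} {φ F : E → ℝ} {c : ℝ} (hc : 0 ≤ c)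
    (hconv : ConvexOn ℝ S (fun x => F x - c * φ x))
    {w x : E} (hw : w ∈ S) (hx : x ∈ S) {d : ℝ}
    (hd : HasDerivAt (fun t : ℝ => φ (w + t • (x - w))) d 0)
    (hmin : ∀ y ∈ S, F w ≤ F y) :
    F w + c * (φ x - φ w - d) ≤ F x := by
  set ψ : ℝ → ℝ := fun t => φ (w + t • (x - w)) with hψ
  have hψ0 : ψ 0 = φ w := by simp [hψ]
  have hev : ∀ᶠ t in 𝓝[>] (0:ℝ), c * (φ x - φ w - slope ψ 0 t) ≤ F x - F w := by
    filter_upwards [Ioc_mem_nhdsGT_of_mem (by simp : (0:ℝ) ∈ Set.Ico (0:ℝ) 1)] with t ht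
    obtain ⟨ht0, ht1⟩ := ht
    have hz : w + t • (x - w) = (1 - t) • w + t • x := by
      rw [sub_smul, one_smul, smul_sub]; abel
    have hmem : (1 - t) • w + t • x ∈ S := hconv.1 hw hx (by linarith) ht0.le (by ring)
    have h1 := hconv.2 hw hx (by linarith : (0:ℝ) ≤ 1 - t) ht0.le (by ring)
    have h2 : F w ≤ F ((1 - t) • w + t • x) := hmin _ hmem
    have hψt : ψ t = φ ((1 - t) • w + t • x) := by rw [hψ]; simp only; rw [hz]
    have h3 : c * (t * φ x + (1 - t) * φ w - φ ((1 - t) • w + t • x)) ≤ t * (F x - F w) := by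
      simp only [smul_eq_mul] at h1
      nlinarith [h1, h2]
    have hst : slope ψ 0 t = (ψ t - ψ 0) / t := by
      rw [slope_def_field]; ring_nf
    have heq : c * (φ x - φ w - slope ψ 0 t)
        = c * (t * φ x + (1 - t) * φ w - φ ((1 - t) • w + t • x)) / t := by
      rw [hst, hψt, hψ0]; field_simp
      ring_nf
    rw [heq, div_le_iff₀ ht0]
    nlinarith [h3]
  have hslope : Tendsto (slope ψ 0) (𝓝[>] 0) (𝓝 d) :=
    (hasDerivAt_iff_tendsto_slope.mp hd).mono_left
      (nhdsWithin_mono 0 (fun t ht => Set.mem_compl_singleton_iff.mpr (ne_of_gt ht)))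
  have hlim : Tendsto (fun t => c * (φ x - φ w - slope ψ 0 t)) (𝓝[>] 0)
      (𝓝 (c * (φ x - φ w - d))) := (tendsto_const_nhds.sub hslope).const_mul c
  have := le_of_tendsto hlim hev
  linarith

set_option maxHeartbeats 1000000 in
lemma arith_cross' {a b dx dy t s th nA c : ℝ} (ha : 0 ≤ a) (hb : 0 ≤ b)
    (ht : 0 < t) (hs : 0 < s) (hth : 0 < th) (hth1 : th ≤ 1) (hA : 0 ≤ nA)
    (hprod : t * s * nA^2 = 1) (hdx : 1/2 * a^2 ≤ dx) (hdy : 1/2 * b^2 ≤ dy)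
    (hc : c ≤ b * (nA * a)) :
    th * c ≤ 1/t * dx + 1/s * dy := by
  have h1 : 1/s = t * nA^2 := by
    field_simp
    linear_combination -hprod
  rw [h1]
  have key2 : 2*t*(th*(b*(nA*a))) ≤ a^2 + t^2*nA^2*b^2 := by
    nlinarith [sq_nonneg (a - t*(th*nA*b)),
      mul_nonneg (mul_nonneg (by nlinarith : (0:ℝ) ≤ 1 - th^2) (sq_nonneg (t*nA)))
        (sq_nonneg b)]
  have key : th*(b*(nA*a)) ≤ 1/t*(1/2*a^2) + t*nA^2*(1/2*b^2) := by
    rw [← mul_le_mul_iff_right₀ (by linarith : (0:ℝ) < 2*t)]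
    have hx : 2*t*(1/t*(1/2*a^2) + t*nA^2*(1/2*b^2)) = a^2 + t^2*nA^2*b^2 := by
      field_simp
    rw [hx]; exact key2
  have h2 : th*c ≤ th*(b*(nA*a)) := mul_le_mul_of_nonneg_left hc hth.le
  have h3 : 1/t*(1/2*a^2) ≤ 1/t*dx := by
    apply mul_le_mul_of_nonneg_left hdx (by positivity)
  have h4 : t*nA^2*(1/2*b^2) ≤ t*nA^2*dy := by
    apply mul_le_mul_of_nonneg_left hdy (by positivity)
  linarith

set_option maxHeartbeats 1000000 in
lemma arith_am' {a b dx dy c1 c2 M cr : ℝ} (ha : 0 ≤ a) (hb : 0 ≤ b) (hM : 0 ≤ M)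
    (hc2 : 0 < c2) (hdisc : M^2 ≤ c1*c2) (hdx : 1/2*a^2 ≤ dx) (hdy : 1/2*b^2 ≤ dy)
    (hcr : -(M*(a*b)) ≤ cr) :
    0 ≤ c1*dx + c2*dy + cr := by
  have hc1 : 0 ≤ c1 := by nlinarith
  have hM' : M ≤ Real.sqrt c1 * Real.sqrt c2 := by
    have hs2 : (Real.sqrt c1 * Real.sqrt c2)^2 = c1*c2 := by
      rw [mul_pow, Real.sq_sqrt hc1, Real.sq_sqrt hc2.le]
    nlinarith [mul_nonneg (Real.sqrt_nonneg c1) (Real.sqrt_nonneg c2)]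
  have hAM : M*(a*b) ≤ 1/2*c1*a^2 + 1/2*c2*b^2 := by
    nlinarith [sq_nonneg (Real.sqrt c1*a - Real.sqrt c2*b), Real.sq_sqrt hc1,
      Real.sq_sqrt hc2.le,
      mul_le_mul_of_nonneg_right hM' (mul_nonneg ha hb)]
  nlinarith [mul_le_mul_of_nonneg_left hdx hc1, mul_le_mul_of_nonneg_left hdy hc2.le]

set_option maxHeartbeats 1600000 in

theorem accsc_global_bound
    {X Y : Type*} [NormedAddCommGroup X] [NormedSpace ℝ X] [CompleteSpace X]
    [NormedAddCommGroup Y] [NormedSpace ℝ Y] [CompleteSpace Y]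
    (A : X →L[ℝ] Y)
    (φX : X → ℝ) (SX : Set X) (gX : X → (X →L[ℝ] ℝ))
    (φY : (Y →L[ℝ] ℝ) → ℝ) (SY : Set (Y →L[ℝ] ℝ)) (gY : (Y →L[ℝ] ℝ) → Y)
    (hSXne : SX.Nonempty) (hφXconv : ConvexOn ℝ SX φX)
    (hφXlsc : LowerSemicontinuousOn φX SX)
    (hSYne : SY.Nonempty) (hφYconv : ConvexOn ℝ SY φY)
    (hφYlsc : LowerSemicontinuousOn φY SY)
    (hφXdiff : ∀ x ∈ interior SX, ∀ w : X,
      HasDerivAt (fun t : ℝ => φX (x + t • w)) (gX x w) 0)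
    (hφYdiff : ∀ p ∈ interior SY, ∀ q : Y →L[ℝ] ℝ,
      HasDerivAt (fun t : ℝ => φY (p + t • q)) (q (gY p)) 0)
    (DX : X → X → ℝ) (hDXdef : ∀ x x', DX x x' = φX x - φX x' - gX x' (x - x'))
    (DY : (Y →L[ℝ] ℝ) → (Y →L[ℝ] ℝ) → ℝ)
    (hDYdef : ∀ p q, DY p q = φY p - φY q - (p - q) (gY q))
    (hscX : ∀ x ∈ SX, ∀ x' ∈ interior SX, (1/2) * ‖x - x'‖ ^ 2 ≤ DX x x')
    (hscY : ∀ p ∈ SY, ∀ q ∈ interior SY, (1/2) * ‖p - q‖ ^ 2 ≤ DY p q)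
    (g : X → ℝ) (Sg : Set X) (hSgne : Sg.Nonempty)
    (hgconv : ConvexOn ℝ Sg g) (hglsc : LowerSemicontinuousOn g Sg)
    (hst : (Y →L[ℝ] ℝ) → ℝ) (Sh : Set (Y →L[ℝ] ℝ)) (hShne : Sh.Nonempty)
    (hhconv : ConvexOn ℝ Sh hst) (hhlsc : LowerSemicontinuousOn hst Sh)
    (L : X → (Y →L[ℝ] ℝ) → ℝ) (hLdef : ∀ x p, L x p = g x + p (A x) - hst p)
    (γg : ℝ) (hγg : 0 < γg)
    (hA6 : ConvexOn ℝ (Sg ∩ SX) (fun x => g x - γg * φX x))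
    (hAne : A ≠ 0)
    (θ τ σ : ℕ → ℝ) (hθ0 : 0 < θ 0 ∧ θ 0 ≤ 1) (hσ0 : 0 < σ 0)
    (hτ0 : τ 0 = 1 / (‖A‖ ^ 2 * σ 0))
    (hθrec : ∀ k : ℕ, θ (k+1) = 1 / Real.sqrt (1 + γg * τ k))
    (hτrec : ∀ k : ℕ, τ (k+1) = θ (k+1) * τ k)
    (hσrec : ∀ k : ℕ, σ (k+1) = σ k / θ (k+1))
    (u : ℕ → X) (v : ℕ → (Y →L[ℝ] ℝ))
    (hu : ∀ k, u k ∈ Sg ∩ interior SX)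
    (hv : ∀ k, v k ∈ Sh ∩ interior SY)
    (hstepx : ∀ k : ℕ, ∀ x ∈ Sg ∩ SX,
      g (u (k+1)) + (v k + θ k • (v k - v (k-1))) (A (u (k+1)))
          + (1/τ k) * DX (u (k+1)) (u k) ≤
        g x + (v k + θ k • (v k - v (k-1))) (A x) + (1/τ k) * DX x (u k))
    (hstepy : ∀ k : ℕ, ∀ p ∈ Sh ∩ SY,
      -hst p + p (A (u (k+1))) - (1/σ k) * DY p (v k) ≤
        -hst (v (k+1)) + (v (k+1)) (A (u (k+1))) - (1/σ k) * DY (v (k+1)) (v k))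
    (Δ : ℕ → X → (Y →L[ℝ] ℝ) → ℝ)
    (hΔdef : ∀ (k : ℕ) (x : X) (p : Y →L[ℝ] ℝ),
      Δ k x p = (1/τ k) * DX x (u k) + (1/σ k) * DY p (v k)
        + (1/σ k) * DY (v k) (v (k-1)) + θ k * ((v k - v (k-1)) (A (x - u k))))
    (xs : X) (ys : Y →L[ℝ] ℝ) (hxs : xs ∈ Sg ∩ SX) (hys : ys ∈ Sh ∩ SY)
    (hsaddle1 : ∀ p ∈ Sh, L xs p ≤ L xs ys)
    (hsaddle2 : ∀ x ∈ Sg, L xs ys ≤ L x ys)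
    :
    ∀ K : ℕ, 1 ≤ K →
      (γg / (1 + γg * τ 0)) * DX xs (u K) + (1/σ K) * DY ys (v K) ≤ Δ K xs ys ∧
      Δ K xs ys ≤ (σ 0 / σ K) * Δ 0 xs ys := by
  -- basic positivity facts
  have hAn : (0:ℝ) < ‖A‖ := norm_pos_iff.mpr hAne
  have hbase : ∀ k, 0 < θ k ∧ θ k ≤ 1 ∧ 0 < τ k ∧ 0 < σ k := by
    intro k
    induction k with
    | zero =>
      refine ⟨hθ0.1, hθ0.2, ?_, hσ0⟩
      rw [hτ0]; positivity
    | succ k ih =>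
      obtain ⟨hθp, hθ1, hτp, hσp⟩ := ih
      have harg : (0:ℝ) < 1 + γg * τ k := by nlinarith
      have hs : 1 ≤ Real.sqrt (1 + γg * τ k) := by
        nlinarith [Real.sq_sqrt harg.le, Real.sqrt_nonneg (1 + γg * τ k)]
      have hθp' : 0 < θ (k+1) := by rw [hθrec]; positivity
      have hθ1' : θ (k+1) ≤ 1 := by
        rw [hθrec]; rw [div_le_one (by linarith)]; exact hs
      exact ⟨hθp', hθ1', by rw [hτrec]; exact mul_pos hθp' hτp,
        by rw [hσrec]; exact div_pos hσp hθp'⟩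
  have hθsq : ∀ k, θ (k+1)^2 * (1 + γg * τ k) = 1 := by
    intro k
    have hτp := (hbase k).2.2.1
    have harg : (0:ℝ) < 1 + γg * τ k := by nlinarith
    rw [hθrec k, div_pow, one_pow, Real.sq_sqrt harg.le]
    field_simp
  have hprod : ∀ k, τ k * σ k * ‖A‖^2 = 1 := by
    intro k
    induction k with
    | zero => rw [hτ0]; field_simp
    | succ k ih =>
      have hθp := (hbase (k+1)).1
      rw [hτrec, hσrec]
      field_simp
      linear_combination ih
  have hτle : ∀ k, τ k ≤ τ 0 := by
    intro k
    induction k with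
    | zero => exact le_refl _
    | succ k ih =>
      have hθ1 := (hbase (k+1)).2.1
      have hθp := (hbase (k+1)).1
      have hτp := (hbase k).2.2.1
      calc τ (k+1) = θ (k+1) * τ k := hτrec k
        _ ≤ 1 * τ k := by nlinarith
        _ ≤ τ 0 := by rw [one_mul]; exact ih
  have hSconvY : Convex ℝ (Sh ∩ SY) := hhconv.1.inter hφYconv.1
  have hhconv' : ConvexOn ℝ (Sh ∩ SY) hst := hhconv.subset Set.inter_subset_left hSconvY
  -- per-step estimate
  have hstep : ∀ k, σ (k+1) * Δ (k+1) xs ys ≤ σ k * Δ k xs ys := by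
    intro k
    obtain ⟨hθp, hθ1, hτp, hσp⟩ := hbase k
    obtain ⟨hθp', hθ1', hτp', hσp'⟩ := hbase (k+1)
    have hprodk := hprod k
    -- three point inequality for x-step
    have hux : u (k+1) ∈ Sg ∩ SX := ⟨(hu (k+1)).1, interior_subset (hu (k+1)).2⟩
    have hcX : (0:ℝ) ≤ γg + 1/τ k := by positivity
    have hconvX : ConvexOn ℝ (Sg ∩ SX)
        (fun x => (g x + (v k + θ k • (v k - v (k-1))) (A x) + (1/τ k) * DX x (u k))
          - (γg + 1/τ k) * φX x) := by
      have haff := convexOn_add_affine' hA6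
        (fun x => (v k + θ k • (v k - v (k-1))) (A x) - (1/τ k) * (gX (u k) x))
        (by intro a b x y
            simp only [map_add, map_smul, ContinuousLinearMap.add_apply,
              ContinuousLinearMap.smul_apply, smul_eq_mul]
            ring)
        ((1/τ k) * (gX (u k) (u k) - φX (u k)))
      have hfe : (fun x => (g x + (v k + θ k • (v k - v (k-1))) (A x) + (1/τ k) * DX x (u k))
          - (γg + 1/τ k) * φX x)
          = fun x => (g x - γg * φX x) + ((v k + θ k • (v k - v (k-1))) (A x)
              - (1/τ k) * (gX (u k) x)) + (1/τ k) * (gX (u k) (u k) - φX (u k)) := by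
        funext x
        rw [hDXdef]
        simp only [map_sub]
        ring
      rw [hfe]
      exact haff
    have h1 := three_point' hcX hconvX hux hxs
      (hφXdiff (u (k+1)) (hu (k+1)).2 (xs - u (k+1)))
      (fun y hy => hstepx k y hy)
    rw [← hDXdef] at h1
    -- three point inequality for y-step
    have hvy : v (k+1) ∈ Sh ∩ SY := ⟨(hv (k+1)).1, interior_subset (hv (k+1)).2⟩
    have hcY : (0:ℝ) ≤ 1/σ k := by positivity
    have hconvY : ConvexOn ℝ (Sh ∩ SY)
        (fun p => (hst p - p (A (u (k+1))) + (1/σ k) * DY p (v k)) - (1/σ k) * φY p) := by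
      have haff := convexOn_add_affine' hhconv'
        (fun p => -(p (A (u (k+1)))) - (1/σ k) * (p (gY (v k))))
        (by intro a b p q
            simp only [ContinuousLinearMap.add_apply, ContinuousLinearMap.smul_apply,
              smul_eq_mul]
            ring)
        ((1/σ k) * ((v k) (gY (v k)) - φY (v k)))
      have hfe : (fun p => (hst p - p (A (u (k+1))) + (1/σ k) * DY p (v k)) - (1/σ k) * φY p)
          = fun p => hst p + (-(p (A (u (k+1)))) - (1/σ k) * (p (gY (v k))))
              + (1/σ k) * ((v k) (gY (v k)) - φY (v k)) := by
        funext p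
        rw [hDYdef]
        simp only [ContinuousLinearMap.sub_apply]
        ring
      rw [hfe]
      exact haff
    have h2 := three_point' hcY hconvY hvy hys
      (hφYdiff (v (k+1)) (hv (k+1)).2 (ys - v (k+1)))
      (fun p hp => by have := hstepy k p hp; linarith)
    rw [← hDYdef] at h2
    -- saddle point inequalities
    have h3a := hsaddle1 (v (k+1)) (hv (k+1)).1
    have h3b := hsaddle2 (u (k+1)) (hu (k+1)).1
    simp only [hLdef] at h3a h3b
    -- Cauchy-Schwarz cross bound
    have hcs0 : (v k - v (k-1)) (A (u k - u (k+1)))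
        ≤ ‖v k - v (k-1)‖ * (‖A‖ * ‖u k - u (k+1)‖) := by
      calc (v k - v (k-1)) (A (u k - u (k+1)))
          ≤ ‖(v k - v (k-1)) (A (u k - u (k+1)))‖ := by
            rw [Real.norm_eq_abs]; exact le_abs_self _
        _ ≤ ‖v k - v (k-1)‖ * ‖A (u k - u (k+1))‖ :=
            (v k - v (k-1)).le_opNorm _
        _ ≤ ‖v k - v (k-1)‖ * (‖A‖ * ‖u k - u (k+1)‖) := by
            gcongr
            exact A.le_opNorm _
    have hsx := hscX (u (k+1)) (interior_subset (hu (k+1)).2) (u k) (hu k).2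
    have hsy := hscY (v k) (interior_subset (hv k).2) (v (k-1)) (hv (k-1)).2
    rw [norm_sub_rev] at hsx
    have h4 : θ k * ((v k - v (k-1)) (A (u k - u (k+1))))
        ≤ 1/τ k * DX (u (k+1)) (u k) + 1/σ k * DY (v k) (v (k-1)) :=
      arith_cross' (norm_nonneg _) (norm_nonneg _) hτp hσp hθp hθ1 (norm_nonneg A)
        hprodk hsx hsy hcs0
    -- the one-step inequality in un-scaled form
    have hstar : (γg + 1/τ k) * DX xs (u (k+1)) + (1/σ k) * DY ys (v (k+1))
        + (1/σ k) * DY (v (k+1)) (v k)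
        + ((v (k+1) - v k) (A (xs - u (k+1)))) ≤ Δ k xs ys := by
      rw [hΔdef]
      simp only [ContinuousLinearMap.add_apply, ContinuousLinearMap.smul_apply,
        ContinuousLinearMap.sub_apply, map_sub, map_add, smul_eq_mul] at h1 h2 h3a h3b h4 ⊢
      linarith
    have hc1 : σ (k+1) * (1/τ (k+1)) = σ k * (γg + 1/τ k) := by
      have hθ2 := hθsq k
      rw [hσrec, hτrec]
      field_simp
      linear_combination -hθ2
    have hc3 : σ (k+1) * θ (k+1) = σ k := by
      rw [hσrec]; field_simp
    have hσeq : σ (k+1) * (1/σ (k+1)) = 1 := by field_simp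
    have hσeq0 : σ k * (1/σ k) = 1 := by field_simp
    have heq : σ (k+1) * Δ (k+1) xs ys
        = σ k * ((γg + 1/τ k) * DX xs (u (k+1)) + (1/σ k) * DY ys (v (k+1))
          + (1/σ k) * DY (v (k+1)) (v k) + ((v (k+1) - v k) (A (xs - u (k+1))))) := by
      rw [hΔdef]
      simp only [Nat.add_sub_cancel]
      linear_combination (DX xs (u (k+1))) * hc1
        + (DY ys (v (k+1)) + DY (v (k+1)) (v k)) * hσeq
        - (DY ys (v (k+1)) + DY (v (k+1)) (v k)) * hσeq0
        + ((v (k+1) - v k) (A (xs - u (k+1)))) * hc3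
    rw [heq]
    exact mul_le_mul_of_nonneg_left hstar hσp.le
  intro K hK
  obtain ⟨m, rfl⟩ : ∃ m, K = m + 1 := ⟨K - 1, (Nat.succ_pred_eq_of_pos hK).symm⟩
  constructor
  · -- lower bound on Δ (m+1)
    obtain ⟨hθp, hθ1, hτp, hσp⟩ := hbase m
    obtain ⟨hθp', hθ1', hτp', hσp'⟩ := hbase (m+1)
    have hθ2 := hθsq m
    have hprodm := hprod m
    have hτ0p : 0 < τ 0 := (hbase 0).2.2.1
    have hP : (0:ℝ) < 1 + γg * τ 0 := by nlinarith
    have hQ : (0:ℝ) < 1 + γg * τ m := by nlinarith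
    have ht2 : (θ (m+1) * (1 + γg * τ 0))^2 * (1 + γg * τ m) = (1 + γg * τ 0)^2 := by
      linear_combination (1 + γg * τ 0)^2 * hθ2
    have hgeg : (1 + γg * τ m) ≤ (1 + γg * τ 0)^2 := by
      nlinarith [mul_le_mul_of_nonneg_left (hτle m) hγg.le, mul_pos hγg hτ0p,
        sq_nonneg (γg * τ 0)]
    have ht3 : 1 ≤ (θ (m+1) * (1 + γg * τ 0))^2 := by nlinarith [ht2, hgeg, hQ]
    have hx1 : 1 ≤ θ (m+1) * (1 + γg * τ 0) := by
      nlinarith [mul_pos hθp' hP, ht3]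
    have key2 : θ (m+1)^2 * (1 + γg * τ 0) + γg * θ (m+1) * τ m ≤ 1 + γg * τ 0 := by
      have hid : (1 + γg * τ 0) - θ (m+1)^2 * (1 + γg * τ 0) - γg * θ (m+1) * τ m
          = γg * τ m * θ (m+1) * (θ (m+1) * (1 + γg * τ 0) - 1) := by
        linear_combination (-(1 + γg * τ 0)) * hθ2
      nlinarith [hid, mul_nonneg (mul_nonneg (mul_nonneg hγg.le hτp.le) hθp'.le)
        (by linarith : (0:ℝ) ≤ θ (m+1) * (1 + γg * τ 0) - 1)]
    have hiσm : 1/σ m = τ m * ‖A‖^2 := by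
      field_simp
      linear_combination -hprodm
    have hiσ' : 1/σ (m+1) = θ (m+1) * (τ m * ‖A‖^2) := by
      rw [hσrec, one_div_div, div_eq_mul_one_div, hiσm]
    have hiτ' : 1/τ (m+1) = 1/θ (m+1) * (1/τ m) := by
      rw [hτrec, one_div, one_div, one_div, mul_inv]
    have hq1 : 1/τ (m+1) * (1/σ (m+1)) = ‖A‖^2 := by
      rw [hiτ', hiσ']
      field_simp
    have hdisc : (θ (m+1) * ‖A‖)^2
        ≤ (1/τ (m+1) - γg / (1 + γg * τ 0)) * (1/σ (m+1)) := by
      have e3 : γg / (1+γg*τ 0) * (1+γg*τ 0) = γg := div_mul_cancel₀ _ hP.ne'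
      have expand : ((1/τ (m+1) - γg/(1+γg*τ 0)) * (1/σ (m+1))) * (1+γg*τ 0)
          = ‖A‖^2*(1+γg*τ 0) - γg*(θ (m+1)*(τ m*‖A‖^2)) := by
        linear_combination (1+γg*τ 0)*hq1 - (1/σ (m+1))*e3 - γg*hiσ'
      have hscaled : (θ (m+1)*‖A‖)^2 * (1+γg*τ 0)
          ≤ ((1/τ (m+1) - γg/(1+γg*τ 0)) * (1/σ (m+1))) * (1+γg*τ 0) := by
        rw [expand]
        nlinarith [mul_le_mul_of_nonneg_right key2 (sq_nonneg ‖A‖)]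
      exact le_of_mul_le_mul_right hscaled hP
    have hc2p : (0:ℝ) < 1/σ (m+1) := by positivity
    rw [hΔdef]
    simp only [Nat.add_sub_cancel]
    have h1 : (1/2) * ‖xs - u (m+1)‖^2 ≤ DX xs (u (m+1)) :=
      hscX xs hxs.2 (u (m+1)) (hu (m+1)).2
    have h2 : (1/2) * ‖v (m+1) - v m‖^2 ≤ DY (v (m+1)) (v m) :=
      hscY (v (m+1)) (interior_subset (hv (m+1)).2) (v m) (hv m).2
    have h3 : -((θ (m+1) * ‖A‖) * (‖xs - u (m+1)‖ * ‖v (m+1) - v m‖))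
        ≤ θ (m+1) * ((v (m+1) - v m) (A (xs - u (m+1)))) := by
      have e0 : -((v (m+1) - v m) (A (xs - u (m+1))))
          ≤ ‖v (m+1) - v m‖ * (‖A‖ * ‖xs - u (m+1)‖) := by
        calc -((v (m+1) - v m) (A (xs - u (m+1))))
            ≤ ‖(v (m+1) - v m) (A (xs - u (m+1)))‖ := by
              rw [Real.norm_eq_abs]; exact neg_le_abs _
          _ ≤ ‖v (m+1) - v m‖ * ‖A (xs - u (m+1))‖ := (v (m+1) - v m).le_opNorm _
          _ ≤ ‖v (m+1) - v m‖ * (‖A‖ * ‖xs - u (m+1)‖) := by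
              gcongr
              exact A.le_opNorm _
      have := mul_le_mul_of_nonneg_left e0 hθp'.le
      nlinarith [this]
    have hfin := arith_am' (norm_nonneg (xs - u (m+1))) (norm_nonneg (v (m+1) - v m))
      (by positivity : (0:ℝ) ≤ θ (m+1) * ‖A‖) hc2p hdisc h1 h2 h3
    linarith [hfin]
  · have mono : ∀ n : ℕ, σ n * Δ n xs ys ≤ σ 0 * Δ 0 xs ys := by
      intro n
      induction n with
      | zero => exact le_refl _
      | succ n ih => exact (hstep n).trans ih
    have hσp' := (hbase (m+1)).2.2.2
    rw [div_mul_eq_mul_div, le_div_iff₀ hσp']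
    nlinarith [mono (m+1)]
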